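/- Let $T > 0$ and let $f : [0,T] \to \mathbb{R}$ be differentiable with $f'$ Lipschitz of constant $1$, and suppose $|f(t)| \le 1$ for all $t \in [0,T]$. Then for all $x \in [0,T]$, $|f'(x)| \le 2/T + T/2 - x(T-x)/T$. In particular $\|f'\|_\infty \le T/2 + 2/T$. -/

import Mathlib

open Set

/-- Membership in Landau's class `𝓛₂(T)`: `f : [0,T] → ℝ` differentiable with
derivative `f'`, `|f| ≤ 1` on `[0,T]`, and `f'` Lipschitz of constant 1. -/
def InL2 (T : ℝ) (f f' : ℝ → ℝ) : Prop :=
  (∀ t ∈ Icc 0 T, HasDerivWithinAt f (f' t) (Icc 0 T) t) ∧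
  (∀ t ∈ Icc 0 T, |f t| ≤ 1) ∧
  LipschitzOnWith 1 f' (Icc 0 T)

/-- Comparison lemma: if `f' ≤ L'` on `(a,b)` then `f b - f a ≤ L b - L a`. -/
lemma landau_step (T : ℝ) (f f' : ℝ → ℝ)
    (hd : ∀ t ∈ Icc 0 T, HasDerivWithinAt f (f' t) (Icc 0 T) t)
    (a b : ℝ) (ha : a ∈ Icc 0 T) (hb : b ∈ Icc 0 T) (hab : a ≤ b)
    (L L' : ℝ → ℝ) (hL : ∀ t, HasDerivAt L (L' t) t)
    (hbd : ∀ t ∈ Ioo a b, f' t ≤ L' t) :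
    f b - f a ≤ L b - L a := by
  have hfc : ContinuousOn f (Icc 0 T) := fun t ht => (hd t ht).continuousWithinAt
  have hLc : Continuous L := by
    have : Differentiable ℝ L := fun t => (hL t).differentiableAt
    exact this.continuous
  have hsub : Icc a b ⊆ Icc 0 T := Icc_subset_Icc ha.1 hb.2
  have hmono : MonotoneOn (fun t => L t - f t) (Icc a b) := by
    apply monotoneOn_of_hasDerivWithinAt_nonneg (convex_Icc a b)
      (f' := fun t => L' t - f' t)
    · exact hLc.continuousOn.sub (hfc.mono hsub)
    · intro t ht
      rw [interior_Icc] at ht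
      have ht' : t ∈ Icc 0 T := hsub (Ioo_subset_Icc_self ht)
      have htm : Icc (0:ℝ) T ∈ nhds t :=
        Icc_mem_nhds (lt_of_le_of_lt ha.1 ht.1) (lt_of_lt_of_le ht.2 hb.2)
      have hfd : HasDerivAt f (f' t) t := (hd t ht').hasDerivAt htm
      exact ((hL t).sub hfd).hasDerivWithinAt
    · intro t ht
      rw [interior_Icc] at ht
      exact sub_nonneg.2 (hbd t ht)
  have := hmono (left_mem_Icc.2 hab) (right_mem_Icc.2 hab) hab
  linarith

/-- Reverse comparison: if `L' ≤ f'` on `(a,b)` then `L b - L a ≤ f b - f a`. -/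
lemma landau_step' (T : ℝ) (f f' : ℝ → ℝ)
    (hd : ∀ t ∈ Icc 0 T, HasDerivWithinAt f (f' t) (Icc 0 T) t)
    (a b : ℝ) (ha : a ∈ Icc 0 T) (hb : b ∈ Icc 0 T) (hab : a ≤ b)
    (L L' : ℝ → ℝ) (hL : ∀ t, HasDerivAt L (L' t) t)
    (hbd : ∀ t ∈ Ioo a b, L' t ≤ f' t) :
    L b - L a ≤ f b - f a := by
  have := landau_step T (fun t => -f t) (fun t => -f' t)
    (fun t ht => (hd t ht).neg) a b ha hb hab
    (fun t => -L t) (fun t => -L' t) (fun t => (hL t).neg)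
    (fun t ht => neg_le_neg (hbd t ht))
  linarith

/-- For `f ∈ 𝓛₂(T)` and `x ∈ [0,T]`,
`|f'(x)| ≤ 2/T + T/2 - x(T-x)/T`; in particular `‖f'‖_∞ ≤ T/2 + 2/T`. -/
theorem landau_pointwise_bound (T : ℝ) (hT : 0 < T) (f f' : ℝ → ℝ)
    (hf : InL2 T f f') :
    (∀ x ∈ Icc 0 T, |f' x| ≤ 2 / T + T / 2 - x * (T - x) / T) ∧
    (∀ x ∈ Icc 0 T, |f' x| ≤ T / 2 + 2 / T) := by
  obtain ⟨hd, hb, hl⟩ := hf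
  have hlip : ∀ s ∈ Icc (0:ℝ) T, ∀ t ∈ Icc (0:ℝ) T, |f' s - f' t| ≤ |s - t| := by
    intro s hs t ht
    have := hl.dist_le_mul s hs t ht
    simpa [Real.dist_eq] using this
  have key : ∀ x ∈ Icc (0:ℝ) T, |f' x| ≤ 2 / T + T / 2 - x * (T - x) / T := by
    intro x hx
    have h0 : (0:ℝ) ∈ Icc (0:ℝ) T := left_mem_Icc.2 hT.le
    have hTm : T ∈ Icc (0:ℝ) T := right_mem_Icc.2 hT.le
    -- upper comparison on [x, T] : f' t ≤ f' x + (t - x)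
    have h1 : f T - f x ≤ (f' x * (T - x) + (T - x)^2 / 2) := by
      have := landau_step T f f' hd x T hx hTm hx.2
        (fun t => f' x * t + (t - x)^2 / 2) (fun t => f' x + (t - x))
        (fun t => by
          have h1 : HasDerivAt (fun t : ℝ => f' x * t) (f' x) t := by
            simpa using (hasDerivAt_id t).const_mul (f' x)
          have h2 : HasDerivAt (fun t : ℝ => (t - x)^2 / 2) (t - x) t := by
            have : HasDerivAt (fun t : ℝ => t - x) 1 t := (hasDerivAt_id t).sub_const x
            simpa using (this.pow 2).div_const 2
          exact h1.add h2)
        (fun t ht => by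
          have htI : t ∈ Icc (0:ℝ) T :=
            ⟨le_trans hx.1 ht.1.le, ht.2.le⟩
          have := hlip t htI x hx
          have h2 : f' t - f' x ≤ |f' t - f' x| := le_abs_self _
          have h3 : |t - x| = t - x := abs_of_nonneg (by linarith [ht.1])
          linarith)
      nlinarith [this]
    -- lower comparison on [x, T] : f' t ≥ f' x - (t - x)
    have h2 : f' x * (T - x) - (T - x)^2 / 2 ≤ f T - f x := by
      have := landau_step' T f f' hd x T hx hTm hx.2
        (fun t => f' x * t - (t - x)^2 / 2) (fun t => f' x - (t - x))
        (fun t => by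
          have h1 : HasDerivAt (fun t : ℝ => f' x * t) (f' x) t := by
            simpa using (hasDerivAt_id t).const_mul (f' x)
          have h2 : HasDerivAt (fun t : ℝ => (t - x)^2 / 2) (t - x) t := by
            have : HasDerivAt (fun t : ℝ => t - x) 1 t := (hasDerivAt_id t).sub_const x
            simpa using (this.pow 2).div_const 2
          exact h1.sub h2)
        (fun t ht => by
          have htI : t ∈ Icc (0:ℝ) T :=
            ⟨le_trans hx.1 ht.1.le, ht.2.le⟩
          have := hlip t htI x hx
          have h2 : -(f' t - f' x) ≤ |f' t - f' x| := neg_le_abs _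
          have h3 : |t - x| = t - x := abs_of_nonneg (by linarith [ht.1])
          linarith)
      nlinarith [this]
    -- upper comparison on [0, x] : f' t ≤ f' x + (x - t)
    have h3 : f x - f 0 ≤ f' x * x + x^2 / 2 := by
      have := landau_step T f f' hd 0 x h0 hx hx.1
        (fun t => f' x * t - (x - t)^2 / 2) (fun t => f' x + (x - t))
        (fun t => by
          have h1 : HasDerivAt (fun t : ℝ => f' x * t) (f' x) t := by
            simpa using (hasDerivAt_id t).const_mul (f' x)
          have h2 : HasDerivAt (fun t : ℝ => (x - t)^2 / 2) (t - x) t := by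
            have h : HasDerivAt (fun t : ℝ => x - t) (-1) t := by
              simpa using (hasDerivAt_id t).const_sub x
            have := (h.fun_pow 2).div_const 2
            exact this.congr_deriv (by ring)
          have := h1.sub h2
          exact this.congr_deriv (by ring))
        (fun t ht => by
          have htI : t ∈ Icc (0:ℝ) T :=
            ⟨ht.1.le, le_trans ht.2.le hx.2⟩
          have := hlip t htI x hx
          have h2 : f' t - f' x ≤ |f' t - f' x| := le_abs_self _
          have h3 : |t - x| = x - t := by
            rw [abs_of_nonpos (by linarith [ht.2])]; ring
          linarith)
      nlinarith [this]
    -- lower comparison on [0, x] : f' t ≥ f' x - (x - t)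
    have h4 : f' x * x - x^2 / 2 ≤ f x - f 0 := by
      have := landau_step' T f f' hd 0 x h0 hx hx.1
        (fun t => f' x * t + (x - t)^2 / 2) (fun t => f' x - (x - t))
        (fun t => by
          have h1 : HasDerivAt (fun t : ℝ => f' x * t) (f' x) t := by
            simpa using (hasDerivAt_id t).const_mul (f' x)
          have h2 : HasDerivAt (fun t : ℝ => (x - t)^2 / 2) (t - x) t := by
            have h : HasDerivAt (fun t : ℝ => x - t) (-1) t := by
              simpa using (hasDerivAt_id t).const_sub x
            have := (h.fun_pow 2).div_const 2
            exact this.congr_deriv (by ring)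
          have := h1.add h2
          exact this.congr_deriv (by ring))
        (fun t ht => by
          have htI : t ∈ Icc (0:ℝ) T :=
            ⟨ht.1.le, le_trans ht.2.le hx.2⟩
          have := hlip t htI x hx
          have h2 : -(f' t - f' x) ≤ |f' t - f' x| := neg_le_abs _
          have h3 : |t - x| = x - t := by
            rw [abs_of_nonpos (by linarith [ht.2])]; ring
          linarith)
      nlinarith [this]
    have hb0 := abs_le.1 (hb 0 h0)
    have hbT := abs_le.1 (hb T hTm)
    -- combine
    have hup : f' x * T ≤ 2 + (x^2 + (T - x)^2) / 2 := by linarith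
    have hlo : -(f' x * T) ≤ 2 + (x^2 + (T - x)^2) / 2 := by linarith
    have habs : |f' x| * T ≤ 2 + (x^2 + (T - x)^2) / 2 := by
      rcases abs_cases (f' x) with ⟨h, _⟩ | ⟨h, _⟩
      · rw [h]; exact hup
      · rw [h]; linarith [hlo]
    rw [← sub_nonneg]
    have : 2 / T + T / 2 - x * (T - x) / T - |f' x|
        = ((2 + (x^2 + (T - x)^2) / 2) - |f' x| * T) / T := by
      field_simp; ring
    rw [this]
    exact div_nonneg (by linarith) hT.le
  refine ⟨key, fun x hx => ?_⟩
  have := key x hx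
  have hnn : 0 ≤ x * (T - x) / T :=
    div_nonneg (mul_nonneg hx.1 (by linarith [hx.2])) hT.le
  linarith
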